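/- For every positive integer k and all real x, y, the alternating sum ∑_{n+m=k} (-1)^m · L_{n,m}(x,y) = (y - x)^k / k! holds, where the sum is over all pairs (n,m) of nonnegative integers with n + m = k. -/

import Mathlib

open Finset

noncomputable def L2 (n m : ℕ) (x y : ℝ) : ℝ :=
  ∑ i ∈ Finset.range (m+1), ∑ s ∈ Finset.range (n+1),
    ((-1:ℝ)^(i+s) / ((Nat.factorial i) * (Nat.factorial s))) *
      ((m+n).choose (m-i)) * ((n+i).choose (n-s)) * x^s * y^i

-- (-1)^(k-n) = (-1)^k * (-1)^n for n ≤ k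
lemma neg_one_pow_sub (k n : ℕ) (h : n ≤ k) : ((-1:ℝ))^(k-n) = (-1)^k * (-1)^n := by
  have h2 : ((-1:ℝ))^(k-n) * (-1)^n = (-1)^k := by
    rw [← pow_add, Nat.sub_add_cancel h]
  have hn : ((-1:ℝ))^n * (-1)^n = 1 := by
    rw [← pow_add, ← two_mul, pow_mul]; norm_num
  calc ((-1:ℝ))^(k-n) = (-1)^(k-n) * ((-1)^n * (-1)^n) := by rw [hn, mul_one]
    _ = ((-1)^(k-n) * (-1)^n) * (-1)^n := by ring
    _ = (-1)^k * (-1)^n := by rw [h2]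

lemma alt_sum (n : ℕ) :
    ∑ t ∈ Finset.range (n+1), ((-1:ℝ))^t * (n.choose t : ℝ) = if n = 0 then 1 else 0 := by
  have h := Int.alternating_sum_range_choose (n := n)
  have h2 := congrArg (fun z : ℤ => (z : ℝ)) h
  push_cast at h2
  simpa using h2

lemma ext_sum (N a : ℕ) (f : ℕ → ℝ) (ha : a < N) :
    ∑ j ∈ Finset.range N, (if j ≤ a then f j else 0) = ∑ j ∈ Finset.range (a+1), f j := by
  rw [← Finset.sum_filter]
  congr 1
  ext j
  simp only [Finset.mem_filter, Finset.mem_range]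
  omega

lemma key (k i s : ℕ) :
    ∑ n ∈ Finset.range (k+1),
      (if s ≤ n ∧ n + i ≤ k then
        ((-1:ℝ))^(k-n) * ((k.choose (k-n-i)) : ℝ) * (((n+i).choose (n-s)) : ℝ) else 0)
    = if i + s = k then ((-1:ℝ))^i else 0 := by
  by_cases hr : i + s ≤ k
  · have hfilter : Finset.filter (fun n => s ≤ n ∧ n + i ≤ k) (Finset.range (k+1))
        = Finset.Ico s (k - i + 1) := by
      ext n
      simp only [Finset.mem_filter, Finset.mem_range, Finset.mem_Ico]
      omega
    rw [← Finset.sum_filter, hfilter, Finset.sum_Ico_eq_sum_range]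
    have hlen : k - i + 1 - s = k - (i + s) + 1 := by omega
    rw [hlen]
    have hterm : ∀ t ∈ Finset.range (k - (i+s) + 1),
        ((-1:ℝ))^(k-(s+t)) * ((k.choose (k-(s+t)-i)) : ℝ) * (((s+t+i).choose (s+t-s)) : ℝ)
        = (((-1:ℝ))^(k+s) * (k.choose (i+s) : ℝ)) * (((-1:ℝ))^t * ((k-(i+s)).choose t : ℝ)) := by
      intro t ht
      simp only [Finset.mem_range] at ht
      have h1 : s + t + i ≤ k := by omega
      have h2 : k - (s+t) - i = k - (s+t+i) := by omega
      have h3 : k.choose (k - (s+t+i)) = k.choose (s+t+i) := Nat.choose_symm h1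
      have h4 : s + t - s = t := by omega
      -- C(s+t+i, t) = C(s+t+i, s+i)
      have h5 : (s+t+i).choose t = (s+t+i).choose (s+i) := by
        have : s + t + i = t + (s + i) := by omega
        rw [this, Nat.choose_symm_add]
      have h6 : k.choose (s+t+i) * (s+t+i).choose (s+i) = k.choose (s+i) * (k - (s+i)).choose t := by
        have h := Nat.choose_mul (n := k) (k := s+t+i) (s := s+i) (by omega)
        have h9 : s + t + i - (s + i) = t := by omega
        rwa [h9] at h
      have h7 : ((-1:ℝ))^(k-(s+t)) = (-1)^(k+s) * (-1)^t := by
        rw [neg_one_pow_sub k (s+t) (by omega), pow_add, pow_add]; ring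
      have h8 : i + s = s + i := by omega
      have h6' : ((k.choose (s+t+i) : ℝ)) * (((s+t+i).choose (s+i)) : ℝ)
          = ((k.choose (s+i)) : ℝ) * (((k-(s+i)).choose t) : ℝ) := by exact_mod_cast h6
      rw [h2, h3, h4, h5, h7, h8]
      linear_combination ((-1:ℝ)^k * (-1)^s * (-1)^t) * h6'
    rw [Finset.sum_congr rfl hterm, ← Finset.mul_sum, alt_sum]
    by_cases hk : i + s = k
    · rw [if_pos hk, if_pos (by omega)]
      have hs2 : ((-1:ℝ))^s * (-1)^s = 1 := by
        rw [← pow_add, ← two_mul, pow_mul]; norm_num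
      rw [hk, Nat.choose_self]
      push_cast
      have h10 : k + s = i + 2*s := by omega
      rw [h10, pow_add, pow_mul]
      norm_num
    · rw [if_neg hk, if_neg (by omega), mul_zero]
  · rw [if_neg (by omega)]
    apply Finset.sum_eq_zero
    intro n _
    rw [if_neg (by omega)]

lemma stepn (k n : ℕ) (hn : n ≤ k) (x y : ℝ) :
    (-1:ℝ)^(k-n) * L2 n (k-n) x y
    = ∑ i ∈ Finset.range (k+1), ∑ s ∈ Finset.range (k+1),
        ((-1:ℝ)^(i+s) / ((Nat.factorial i) * (Nat.factorial s))) * x^s * y^i *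
          (if s ≤ n ∧ n + i ≤ k then
            ((-1:ℝ))^(k-n) * ((k.choose (k-n-i)) : ℝ) * (((n+i).choose (n-s)) : ℝ) else 0) := by
  have hm : k - n + n = k := by omega
  unfold L2
  rw [hm]
  -- reduce RHS
  have hsplit : ∀ i s : ℕ,
      ((-1:ℝ)^(i+s) / ((Nat.factorial i) * (Nat.factorial s))) * x^s * y^i *
        (if s ≤ n ∧ n + i ≤ k then
          ((-1:ℝ))^(k-n) * ((k.choose (k-n-i)) : ℝ) * (((n+i).choose (n-s)) : ℝ) else 0)
      = if n + i ≤ k then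
          (if s ≤ n then
            ((-1:ℝ)^(i+s) / ((Nat.factorial i) * (Nat.factorial s))) * x^s * y^i *
              (((-1:ℝ))^(k-n) * ((k.choose (k-n-i)) : ℝ) * (((n+i).choose (n-s)) : ℝ)) else 0)
        else 0 := by
    intro i s
    by_cases h1 : n + i ≤ k <;> by_cases h2 : s ≤ n <;> simp [h1, h2]
  calc (-1:ℝ)^(k-n) * ∑ i ∈ Finset.range (k-n+1), ∑ s ∈ Finset.range (n+1),
        ((-1:ℝ)^(i+s) / ((Nat.factorial i) * (Nat.factorial s))) *
          ((k).choose (k-n-i)) * ((n+i).choose (n-s)) * x^s * y^i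
      = ∑ i ∈ Finset.range (k-n+1), ∑ s ∈ Finset.range (n+1),
        ((-1:ℝ)^(i+s) / ((Nat.factorial i) * (Nat.factorial s))) * x^s * y^i *
          (((-1:ℝ))^(k-n) * ((k.choose (k-n-i)) : ℝ) * (((n+i).choose (n-s)) : ℝ)) := by
        rw [Finset.mul_sum]
        refine Finset.sum_congr rfl fun i _ => ?_
        rw [Finset.mul_sum]
        refine Finset.sum_congr rfl fun s _ => ?_
        ring
    _ = ∑ i ∈ Finset.range (k+1), ∑ s ∈ Finset.range (k+1),
        ((-1:ℝ)^(i+s) / ((Nat.factorial i) * (Nat.factorial s))) * x^s * y^i *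
          (if s ≤ n ∧ n + i ≤ k then
            ((-1:ℝ))^(k-n) * ((k.choose (k-n-i)) : ℝ) * (((n+i).choose (n-s)) : ℝ) else 0) := by
        symm
        rw [Finset.sum_congr rfl (fun i _ => Finset.sum_congr rfl (fun s _ => hsplit i s))]
        have houter : ∀ i : ℕ,
            (∑ s ∈ Finset.range (k+1), if n + i ≤ k then
              (if s ≤ n then
                ((-1:ℝ)^(i+s) / ((Nat.factorial i) * (Nat.factorial s))) * x^s * y^i *
                  (((-1:ℝ))^(k-n) * ((k.choose (k-n-i)) : ℝ) * (((n+i).choose (n-s)) : ℝ)) else 0)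
              else 0)
            = if i ≤ k - n then
                ∑ s ∈ Finset.range (n+1),
                  ((-1:ℝ)^(i+s) / ((Nat.factorial i) * (Nat.factorial s))) * x^s * y^i *
                    (((-1:ℝ))^(k-n) * ((k.choose (k-n-i)) : ℝ) * (((n+i).choose (n-s)) : ℝ))
              else 0 := by
          intro i
          by_cases h1 : n + i ≤ k
          · rw [if_pos (by omega)]
            simp only [if_pos h1]
            exact ext_sum (k+1) n _ (by omega)
          · rw [if_neg (by omega)]
            simp only [if_neg h1]
            exact Finset.sum_const_zero
        rw [Finset.sum_congr rfl (fun i _ => houter i)]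
        exact ext_sum (k+1) (k-n) _ (by omega)

theorem stmt15 (k : ℕ) (hk : 1 ≤ k) (x y : ℝ) :
    ∑ n ∈ Finset.range (k+1), (-1:ℝ)^(k-n) * L2 n (k-n) x y =
      (y - x)^k / (Nat.factorial k) := by
  have hL : ∑ n ∈ Finset.range (k+1), (-1:ℝ)^(k-n) * L2 n (k-n) x y
      = ∑ i ∈ Finset.range (k+1), ∑ s ∈ Finset.range (k+1), ∑ n ∈ Finset.range (k+1),
          ((-1:ℝ)^(i+s) / ((Nat.factorial i) * (Nat.factorial s))) * x^s * y^i *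
            (if s ≤ n ∧ n + i ≤ k then
              ((-1:ℝ))^(k-n) * ((k.choose (k-n-i)) : ℝ) * (((n+i).choose (n-s)) : ℝ) else 0) := by
    rw [Finset.sum_congr rfl (fun n hn => stepn k n (by simpa using Finset.mem_range_succ_iff.mp hn) x y)]
    rw [Finset.sum_comm]
    refine Finset.sum_congr rfl fun i _ => ?_
    rw [Finset.sum_comm]
  rw [hL]
  have hinner : ∀ i ∈ Finset.range (k+1), ∀ s ∈ Finset.range (k+1),
      ∑ n ∈ Finset.range (k+1),
          ((-1:ℝ)^(i+s) / ((Nat.factorial i) * (Nat.factorial s))) * x^s * y^i *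
            (if s ≤ n ∧ n + i ≤ k then
              ((-1:ℝ))^(k-n) * ((k.choose (k-n-i)) : ℝ) * (((n+i).choose (n-s)) : ℝ) else 0)
      = if s = k - i then
          ((-1:ℝ)^(i+s) / ((Nat.factorial i) * (Nat.factorial s))) * x^s * y^i * (-1)^i
        else 0 := by
    intro i hi s hs
    rw [← Finset.mul_sum, key k i s]
    simp only [Finset.mem_range] at hi hs
    by_cases h : i + s = k
    · rw [if_pos h, if_pos (by omega)]
    · rw [if_neg h, if_neg (by omega), mul_zero]
  rw [Finset.sum_congr rfl (fun i hi => Finset.sum_congr rfl (fun s hs => hinner i hi s hs))]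
  have hcollapse : ∀ i ∈ Finset.range (k+1),
      (∑ s ∈ Finset.range (k+1), if s = k - i then
          ((-1:ℝ)^(i+s) / ((Nat.factorial i) * (Nat.factorial s))) * x^s * y^i * (-1)^i
        else 0)
      = ((-1:ℝ)^(i+(k-i)) / ((Nat.factorial i) * (Nat.factorial (k-i)))) * x^(k-i) * y^i * (-1)^i := by
    intro i hi
    simp only [Finset.mem_range] at hi
    rw [Finset.sum_ite_eq' (Finset.range (k+1)) (k-i)
      (fun s => ((-1:ℝ)^(i+s) / ((Nat.factorial i) * (Nat.factorial s))) * x^s * y^i * (-1)^i)]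
    rw [if_pos (Finset.mem_range.mpr (by omega))]
  rw [Finset.sum_congr rfl hcollapse]
  have hrhs : (y - x)^k = ∑ i ∈ Finset.range (k+1), y^i * (-x)^(k-i) * (k.choose i : ℝ) := by
    rw [show y - x = y + (-x) by ring, add_pow]
  rw [hrhs, Finset.sum_div]
  refine Finset.sum_congr rfl fun i hi => ?_
  simp only [Finset.mem_range] at hi
  have hik : i ≤ k := by omega
  have hfac : (k.choose i : ℝ) * (Nat.factorial i) * (Nat.factorial (k-i)) = (Nat.factorial k) := by
    exact_mod_cast congrArg (Nat.cast : ℕ → ℝ) (Nat.choose_mul_factorial_mul_factorial hik)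
  have hiki : i + (k - i) = k := by omega
  rw [hiki]
  have hneg : ((-1:ℝ))^(k-i) = (-1)^k * (-1)^i := neg_one_pow_sub k i hik
  have hnegx : (-x)^(k-i) = ((-1:ℝ))^(k-i) * x^(k-i) := by rw [neg_pow]
  rw [hnegx, hneg]
  have hfi : (Nat.factorial i : ℝ) ≠ 0 := by positivity
  have hfki : (Nat.factorial (k-i) : ℝ) ≠ 0 := by positivity
  have hfk : (Nat.factorial k : ℝ) ≠ 0 := by positivity
  field_simp
  rw [← hfac]
  ring
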